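/- Let A, B, C be compact convex planar sets with pairwise nonempty intersections and empty triple intersection, and let A' ⊆ A, B' ⊆ B, C' ⊆ C be convex sets that are pairwise intersecting. Then the orientation of (A', B', C') equals the orientation of (A, B, C), where the orientation of such a triple is defined as the orientation of any points x ∈ B∩C, y ∈ A∩C, z ∈ A∩B (respectively x' ∈ B'∩C', etc.). -/

import Mathlib

noncomputable def det2 (p q r : ℝ × ℝ) : ℝ :=
  (q.1 - p.1) * (r.2 - p.2) - (q.2 - p.2) * (r.1 - p.1)

noncomputable def ptOrient (p q r : ℝ × ℝ) : ℝ := Real.sign (det2 p q r)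

lemma collinear_of_det2_eq_zero {x y z : ℝ × ℝ} (h : det2 x y z = 0) :
    Collinear ℝ ({x, y, z} : Set (ℝ × ℝ)) := by
  unfold det2 at h
  rw [collinear_iff_of_mem (Set.mem_insert x _)]
  by_cases hyx : y = x
  · refine ⟨z - x, ?_⟩
    intro p hp
    rcases hp with rfl | rfl | rfl
    · exact ⟨0, by simp⟩
    · exact ⟨0, by simp [hyx]⟩
    · exact ⟨1, by simp⟩
  · refine ⟨y - x, ?_⟩
    intro p hp
    rcases hp with rfl | rfl | hp
    · exact ⟨0, by simp⟩
    · exact ⟨1, by simp⟩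
    · rw [Set.mem_singleton_iff] at hp
      subst hp
      by_cases h1 : y.1 - x.1 = 0
      · have h2 : y.2 - x.2 ≠ 0 := by
          intro h2
          apply hyx
          apply Prod.ext <;> [linarith; linarith]
        refine ⟨(p.2 - x.2) / (y.2 - x.2), ?_⟩
        have hp1 : p.1 - x.1 = 0 := by
          rw [h1] at h
          rcases mul_eq_zero.1 (by linarith : (y.2 - x.2) * (p.1 - x.1) = 0) with h' | h'
          · exact absurd h' h2
          · exact h'
        apply Prod.ext
        · show p.1 = (p.2 - x.2) / (y.2 - x.2) * (y.1 - x.1) + x.1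
          rw [h1]
          simpa using by linarith
        · show p.2 = (p.2 - x.2) / (y.2 - x.2) * (y.2 - x.2) + x.2
          field_simp
          ring
      · refine ⟨(p.1 - x.1) / (y.1 - x.1), ?_⟩
        apply Prod.ext
        · show p.1 = (p.1 - x.1) / (y.1 - x.1) * (y.1 - x.1) + x.1
          field_simp
          ring
        · show p.2 = (p.1 - x.1) / (y.1 - x.1) * (y.2 - x.2) + x.2
          field_simp
          nlinarith [h]

lemma det2_ne_zero {A B C : Set (ℝ × ℝ)}
    (hA : Convex ℝ A) (hB : Convex ℝ B) (hC : Convex ℝ C)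
    (hABC : A ∩ B ∩ C = ∅) {x y z : ℝ × ℝ}
    (hx : x ∈ B ∩ C) (hy : y ∈ A ∩ C) (hz : z ∈ A ∩ B) :
    det2 x y z ≠ 0 := by
  intro h
  have hcol := collinear_of_det2_eq_zero h
  have hmem : ∀ p, p ∈ A ∩ B ∩ C → False := by
    intro p hp; rw [hABC] at hp; exact hp
  rcases hcol.wbtw_or_wbtw_or_wbtw with hw | hw | hw
  · -- y ∈ [x, z], x z ∈ B
    have : y ∈ B := hB.segment_subset hx.1 hz.2 hw.mem_segment
    exact hmem y ⟨⟨hy.1, this⟩, hy.2⟩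
  · -- z ∈ [y, x], y x ∈ C
    have : z ∈ C := hC.segment_subset hy.2 hx.2 hw.mem_segment
    exact hmem z ⟨⟨hz.1, hz.2⟩, this⟩
  · -- x ∈ [z, y], z y ∈ A
    have : x ∈ A := hA.segment_subset hz.1 hy.1 hw.mem_segment
    exact hmem x ⟨⟨this, hx.1⟩, hx.2⟩

theorem stmt_2 (A B C A' B' C' : Set (ℝ × ℝ))
    (hAc : IsCompact A) (hBc : IsCompact B) (hCc : IsCompact C)
    (hA : Convex ℝ A) (hB : Convex ℝ B) (hC : Convex ℝ C)
    (hAB : (A ∩ B).Nonempty) (hBC : (B ∩ C).Nonempty) (hAC : (A ∩ C).Nonempty)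
    (hABC : A ∩ B ∩ C = ∅)
    (hA' : Convex ℝ A') (hB' : Convex ℝ B') (hC' : Convex ℝ C')
    (hsubA : A' ⊆ A) (hsubB : B' ⊆ B) (hsubC : C' ⊆ C)
    (hAB' : (A' ∩ B').Nonempty) (hBC' : (B' ∩ C').Nonempty) (hAC' : (A' ∩ C').Nonempty)
    (x y z x' y' z' : ℝ × ℝ)
    (hx : x ∈ B ∩ C) (hy : y ∈ A ∩ C) (hz : z ∈ A ∩ B)
    (hx' : x' ∈ B' ∩ C') (hy' : y' ∈ A' ∩ C') (hz' : z' ∈ A' ∩ B') :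
    ptOrient x' y' z' = ptOrient x y z := by
  set S : Set ((ℝ × ℝ) × (ℝ × ℝ) × (ℝ × ℝ)) :=
    (B ∩ C) ×ˢ ((A ∩ C) ×ˢ (A ∩ B)) with hS
  have hconv : Convex ℝ S := (hB.inter hC).prod ((hA.inter hC).prod (hA.inter hB))
  have hpre : IsPreconnected S := hconv.isPreconnected
  set f : ((ℝ × ℝ) × (ℝ × ℝ) × (ℝ × ℝ)) → ℝ :=
    fun p => det2 p.1 p.2.1 p.2.2 with hf
  have hfc : ContinuousOn f S := by
    apply Continuous.continuousOn
    unfold f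
    unfold det2
    fun_prop
  have hxm : x' ∈ B ∩ C := ⟨hsubB hx'.1, hsubC hx'.2⟩
  have hym : y' ∈ A ∩ C := ⟨hsubA hy'.1, hsubC hy'.2⟩
  have hzm : z' ∈ A ∩ B := ⟨hsubA hz'.1, hsubB hz'.2⟩
  have hp : (x, y, z) ∈ S := ⟨hx, hy, hz⟩
  have hp' : (x', y', z') ∈ S := ⟨hxm, hym, hzm⟩
  have hne : det2 x y z ≠ 0 := det2_ne_zero hA hB hC hABC hx hy hz
  have hne' : det2 x' y' z' ≠ 0 := det2_ne_zero hA hB hC hABC hxm hym hzm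
  have hnz : ∀ q ∈ S, f q ≠ 0 := by
    rintro ⟨a, b, c⟩ ⟨ha, hb, hc⟩
    exact det2_ne_zero hA hB hC hABC ha hb hc
  have key : ¬ (det2 x' y' z' < 0 ∧ 0 < det2 x y z) ∧
      ¬ (det2 x y z < 0 ∧ 0 < det2 x' y' z') := by
    constructor
    · rintro ⟨h1, h2⟩
      have := hpre.intermediate_value hp' hp hfc
      have h0 : (0 : ℝ) ∈ Set.Icc (f (x', y', z')) (f (x, y, z)) :=
        ⟨le_of_lt h1, le_of_lt h2⟩
      obtain ⟨q, hq, hq0⟩ := this h0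
      exact hnz q hq hq0
    · rintro ⟨h1, h2⟩
      have := hpre.intermediate_value hp hp' hfc
      have h0 : (0 : ℝ) ∈ Set.Icc (f (x, y, z)) (f (x', y', z')) :=
        ⟨le_of_lt h1, le_of_lt h2⟩
      obtain ⟨q, hq, hq0⟩ := this h0
      exact hnz q hq hq0
  unfold ptOrient
  rcases lt_or_gt_of_ne hne with hneg | hpos
  · rcases lt_or_gt_of_ne hne' with hneg' | hpos'
    · rw [Real.sign_of_neg hneg, Real.sign_of_neg hneg']
    · exact absurd ⟨hneg, hpos'⟩ key.2
  · rcases lt_or_gt_of_ne hne' with hneg' | hpos'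
    · exact absurd ⟨hneg', hpos⟩ key.1
    · rw [Real.sign_of_pos hpos, Real.sign_of_pos hpos']
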